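/- arXiv:1508.00178 — 3 statements merged into one kernel-verified Lean document; each statement's English description precedes it below -/
import Mathlib

section
/- Let G be a finite group of order 2d with a central element c of order 2, and call Φ ⊆ G a CM type if Φ ⊔ cΦ = G. For s ∈ G one has Σ_Φ |Φ ∩ sΦ| (sum over all CM types Φ) equal to d·2^d if s = 1, equal to 0 if s = c, and equal to d·2^{d-1} otherwise. -/
/-- The set of CM types of a finite group `G` with respect to a central element `c`
of order `2`: subsets `Φ ⊆ G` with `Φ` and `cΦ` disjoint with union `G`. -/
def cmTypes (G : Type*) [Group G] [Fintype G] [DecidableEq G] (c : G) :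
    Finset (Finset G) :=
  Finset.univ.filter
    (fun Φ => Disjoint Φ (Φ.image (c * ·)) ∧ Φ ∪ Φ.image (c * ·) = Finset.univ)

section CMAux

variable {G : Type*} [Group G] [Fintype G] [DecidableEq G] {c : G}

private lemma cm_cc (hc2 : c ^ 2 = 1) (g : G) : c * (c * g) = g := by
  rw [← mul_assoc, ← pow_two, hc2, one_mul]

private lemma cm_mem_image (s : G) (Φ : Finset G) (x : G) :
    x ∈ Φ.image (s * ·) ↔ s⁻¹ * x ∈ Φ := by
  simp only [Finset.mem_image]
  constructor
  · rintro ⟨a, ha, rfl⟩; simpa [inv_mul_cancel_left] using ha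
  · intro h; exact ⟨s⁻¹ * x, h, by simp [mul_inv_cancel_left]⟩

private lemma cm_mem_image_c (hc2 : c ^ 2 = 1) (Φ : Finset G) (x : G) :
    x ∈ Φ.image (c * ·) ↔ c * x ∈ Φ := by
  rw [cm_mem_image]
  have : c⁻¹ = c := by
    rw [eq_comm, eq_inv_iff_mul_eq_one, ← pow_two, hc2]
  rw [this]

private lemma cm_mem_cmTypes (hc2 : c ^ 2 = 1) (Φ : Finset G) :
    Φ ∈ cmTypes G c ↔ ∀ g, (g ∈ Φ ↔ c * g ∉ Φ) := by
  simp only [cmTypes, Finset.mem_filter, Finset.mem_univ, true_and,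
    Finset.disjoint_left, Finset.eq_univ_iff_forall, Finset.mem_union,
    cm_mem_image_c hc2]
  constructor
  · rintro ⟨h1, h2⟩ g
    exact ⟨fun hg => h1 hg, fun hcg => (h2 g).resolve_right hcg⟩
  · intro h
    refine ⟨fun {a} ha => (h a).1 ha, fun g => ?_⟩
    by_cases hg : g ∈ Φ
    · exact Or.inl hg
    · exact Or.inr (by_contra fun hcg => hg ((h g).2 hcg))

private lemma cm_card {d : ℕ} (hG : Fintype.card G = 2 * d) {Φ : Finset G}
    (hΦ : Φ ∈ cmTypes G c) : Φ.card = d := by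
  simp only [cmTypes, Finset.mem_filter, Finset.mem_univ, true_and] at hΦ
  obtain ⟨h1, h2⟩ := hΦ
  have himg : (Φ.image (c * ·)).card = Φ.card :=
    Finset.card_image_of_injective _ (mul_right_injective c)
  have h3 := Finset.card_union_of_disjoint h1
  rw [h2, Finset.card_univ, hG, himg] at h3
  omega

/-- Existence of a CM-type partition within any `c`-stable subset. -/
private lemma cm_exists_aux (hc2 : c ^ 2 = 1) (hc1 : c ≠ 1) :
    ∀ A : Finset G, (∀ g, g ∈ A ↔ c * g ∈ A) →
      ∃ Φ ⊆ A, ∀ g ∈ A, (g ∈ Φ ↔ c * g ∉ Φ) := by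
  intro A
  induction A using Finset.strongInduction with
  | _ A ih =>
    intro hA
    rcases A.eq_empty_or_nonempty with rfl | ⟨a, ha⟩
    · exact ⟨∅, Finset.Subset.refl _, fun g hg => absurd hg (Finset.notMem_empty g)⟩
    · have hca : c * a ∈ A := (hA a).1 ha
      have hane : a ≠ c * a := fun h => hc1 (by
        have := h.symm
        nth_rewrite 2 [← one_mul a] at this
        exact mul_right_cancel this)
      set A' := A \ {a, c * a} with hA'
      have hsub : A' ⊂ A := by
        refine Finset.ssubset_iff_of_subset (Finset.sdiff_subset) |>.2 ⟨a, ha, ?_⟩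
        simp [hA']
      have hA'c : ∀ g, g ∈ A' ↔ c * g ∈ A' := by
        intro g
        simp only [hA', Finset.mem_sdiff, Finset.mem_insert, Finset.mem_singleton]
        constructor
        · rintro ⟨hg, hne⟩
          refine ⟨(hA g).1 hg, ?_⟩
          push_neg at hne ⊢
          refine ⟨fun h => hne.2 ?_, fun h => hne.1 ?_⟩
          · rw [← h, cm_cc hc2]
          · have := congrArg (c * ·) h
            simpa [cm_cc hc2] using this
        · rintro ⟨hg, hne⟩
          have hg' : g ∈ A := by
            have := (hA (c * g)).1 hg
            rwa [cm_cc hc2] at this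
          refine ⟨hg', ?_⟩
          push_neg at hne ⊢
          refine ⟨fun h => hne.2 (by rw [h]), fun h => hne.1 ?_⟩
          · rw [h, cm_cc hc2]
      obtain ⟨Φ', hΦ'sub, hΦ'⟩ := ih A' hsub hA'c
      have hanotA' : a ∉ A' := by simp [hA']
      have hcanotA' : c * a ∉ A' := by simp [hA']
      refine ⟨insert a Φ', ?_, ?_⟩
      · intro x hx
        rcases Finset.mem_insert.1 hx with rfl | hx
        · exact ha
        · exact Finset.sdiff_subset (hΦ'sub hx)
      · intro g hg
        by_cases hg' : g ∈ A'
        · have hcg' : c * g ∈ A' := (hA'c g).1 hg'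
          have h1 : g ≠ a := fun h => hanotA' (h ▸ hg')
          have h2 : c * g ≠ a := fun h => hanotA' (h ▸ hcg')
          simp only [Finset.mem_insert, h1, h2, false_or]
          exact hΦ' g hg'
        · have : g = a ∨ g = c * a := by
            by_contra hcon
            push_neg at hcon
            exact hg' (by simp [hA', hg, hcon.1, hcon.2])
          have hmem : a ∈ insert a Φ' := Finset.mem_insert_self a Φ'
          have hnot : c * a ∉ insert a Φ' := by
            rw [Finset.mem_insert]
            push_neg
            exact ⟨fun h => hane h.symm, fun h => hcanotA' (hΦ'sub h)⟩
          rcases this with rfl | rfl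
          · simp [hmem, hnot]
          · rw [cm_cc hc2]
            simp [hmem, hnot]

private lemma cm_exists (hc2 : c ^ 2 = 1) (hc1 : c ≠ 1) :
    ∃ Φ, Φ ∈ cmTypes G c := by
  obtain ⟨Φ, _, hΦ⟩ := cm_exists_aux hc2 hc1 Finset.univ (by simp)
  exact ⟨Φ, (cm_mem_cmTypes hc2 Φ).2 fun g => hΦ g (Finset.mem_univ g)⟩

private lemma cm_card_cmTypes {d : ℕ} (hG : Fintype.card G = 2 * d)
    (hc2 : c ^ 2 = 1) (hc1 : c ≠ 1) : (cmTypes G c).card = 2 ^ d := by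
  obtain ⟨Φ₀, hΦ₀⟩ := cm_exists hc2 hc1
  have hΦ₀' := (cm_mem_cmTypes hc2 Φ₀).1 hΦ₀
  have key : (cmTypes G c).card = Φ₀.powerset.card := by
    refine Finset.card_bij' (fun Ψ _ => Φ₀ ∩ Ψ)
      (fun S _ => S ∪ (Φ₀ \ S).image (c * ·)) ?_ ?_ ?_ ?_
    · intro Ψ _
      exact Finset.mem_powerset.2 (Finset.inter_subset_left)
    · intro S hS
      have hS' : S ⊆ Φ₀ := Finset.mem_powerset.1 hS
      rw [cm_mem_cmTypes hc2]
      intro g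
      have h1 : g ∈ Φ₀ ↔ c * g ∉ Φ₀ := hΦ₀' g
      have h2 : c * g ∈ Φ₀ ↔ g ∉ Φ₀ := by
        have := hΦ₀' (c * g); rwa [cm_cc hc2] at this
      have h3 : g ∈ S → g ∈ Φ₀ := fun h => hS' h
      have h4 : c * g ∈ S → c * g ∈ Φ₀ := fun h => hS' h
      simp only [Finset.mem_union, cm_mem_image_c hc2, Finset.mem_sdiff, cm_cc hc2]
      tauto
    · intro Ψ hΨ
      have hΨ' := (cm_mem_cmTypes hc2 Ψ).1 hΨ
      ext x
      have h1 : x ∈ Φ₀ ↔ c * x ∉ Φ₀ := hΦ₀' x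
      have h2 : c * x ∈ Ψ ↔ x ∉ Ψ := by
        have := hΨ' (c * x); rwa [cm_cc hc2] at this
      simp only [Finset.mem_union, Finset.mem_inter, cm_mem_image_c hc2,
        Finset.mem_sdiff]
      tauto
    · intro S hS
      have hS' : S ⊆ Φ₀ := Finset.mem_powerset.1 hS
      ext x
      have h1 : x ∈ Φ₀ ↔ c * x ∉ Φ₀ := hΦ₀' x
      have h3 : x ∈ S → x ∈ Φ₀ := fun h => hS' h
      simp only [Finset.mem_inter, Finset.mem_union, cm_mem_image_c hc2,
        Finset.mem_sdiff]
      tauto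
  rw [key, Finset.card_powerset, cm_card hG hΦ₀]

private lemma cm_flip_mem (hc2 : c ^ 2 = 1) {b : G} {Φ : Finset G}
    (hΦ : Φ ∈ cmTypes G c) : symmDiff Φ ({b, c * b} : Finset G) ∈ cmTypes G c := by
  rw [cm_mem_cmTypes hc2] at hΦ ⊢
  intro g
  have hP : g ∈ ({b, c * b} : Finset G) ↔ c * g ∈ ({b, c * b} : Finset G) := by
    simp only [Finset.mem_insert, Finset.mem_singleton]
    constructor
    · rintro (rfl | rfl)
      · exact Or.inr rfl
      · exact Or.inl (cm_cc hc2 b)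
    · rintro (h | h)
      · right; rw [← h, cm_cc hc2]
      · left; exact mul_left_cancel h
  have h1 := hΦ g
  rw [Finset.mem_symmDiff, Finset.mem_symmDiff]
  tauto

private lemma cm_half (hc2 : c ^ 2 = 1) (hcen : ∀ g : G, c * g = g * c) {s : G}
    (hs1 : s ≠ 1) (hsc : s ≠ c) (g : G) :
    2 * ((cmTypes G c).filter (fun Φ => g ∈ Φ ∧ s⁻¹ * g ∈ Φ)).card
      = ((cmTypes G c).filter (fun Φ => g ∈ Φ)).card := by
  set b := s⁻¹ * g with hb
  have hgb : g ≠ b := by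
    intro h
    apply hs1
    have h2 : s * g = 1 * g := by
      nth_rewrite 1 [h]
      rw [hb, mul_inv_cancel_left, one_mul]
    exact mul_right_cancel h2
  have hgcb : g ≠ c * b := by
    intro h
    apply hsc
    have h2 : s * g = c * g := by
      nth_rewrite 1 [h]
      rw [hb, ← mul_assoc, ← hcen s, mul_assoc, mul_inv_cancel_left]
    exact mul_right_cancel h2
  have hgP : g ∉ ({b, c * b} : Finset G) := by simp [hgb, hgcb]
  have hbP : b ∈ ({b, c * b} : Finset G) := by simp
  have key : ((cmTypes G c).filter (fun Φ => g ∈ Φ ∧ b ∈ Φ)).card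
      = ((cmTypes G c).filter (fun Φ => g ∈ Φ ∧ b ∉ Φ)).card := by
    refine Finset.card_bij' (fun Φ _ => symmDiff Φ {b, c * b})
      (fun Φ _ => symmDiff Φ {b, c * b}) ?_ ?_ ?_ ?_
    · intro Φ hΦ
      rw [Finset.mem_filter] at hΦ ⊢
      obtain ⟨hΦ, hgΦ, hbΦ⟩ := hΦ
      refine ⟨cm_flip_mem hc2 hΦ, ?_, ?_⟩
      · rw [Finset.mem_symmDiff]; exact Or.inl ⟨hgΦ, hgP⟩
      · rw [Finset.mem_symmDiff]
        rintro (⟨_, h⟩ | ⟨_, h⟩)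
        · exact h hbP
        · exact h hbΦ
    · intro Φ hΦ
      rw [Finset.mem_filter] at hΦ ⊢
      obtain ⟨hΦ, hgΦ, hbΦ⟩ := hΦ
      refine ⟨cm_flip_mem hc2 hΦ, ?_, ?_⟩
      · rw [Finset.mem_symmDiff]; exact Or.inl ⟨hgΦ, hgP⟩
      · rw [Finset.mem_symmDiff]; exact Or.inr ⟨hbP, hbΦ⟩
    · intro Φ _; exact symmDiff_symmDiff_cancel_right _ Φ
    · intro Φ _; exact symmDiff_symmDiff_cancel_right _ Φ
  have hsplit := Finset.card_filter_add_card_filter_not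
      (s := (cmTypes G c).filter (fun Φ => g ∈ Φ)) (p := fun Φ => b ∈ Φ)
  rw [Finset.filter_filter, Finset.filter_filter] at hsplit
  omega

end CMAux

/-- For a finite group `G` of order `2d` with a central element `c` of order `2`,
the sum over all CM types `Φ` of `|Φ ∩ sΦ|` equals `d·2^d` if `s = 1`,
`0` if `s = c`, and `d·2^(d-1)` otherwise. -/
theorem stmt2 {G : Type*} [Group G] [Fintype G] [DecidableEq G] (d : ℕ)
    (hG : Fintype.card G = 2 * d) (c : G) (hc2 : c ^ 2 = 1) (hc1 : c ≠ 1)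
    (hcen : ∀ g : G, c * g = g * c) (s : G) :
    (s = 1 →
      ∑ Φ ∈ cmTypes G c, (Φ ∩ Φ.image (s * ·)).card = d * 2 ^ d) ∧
    (s = c →
      ∑ Φ ∈ cmTypes G c, (Φ ∩ Φ.image (s * ·)).card = 0) ∧
    (s ≠ 1 → s ≠ c →
      ∑ Φ ∈ cmTypes G c, (Φ ∩ Φ.image (s * ·)).card = d * 2 ^ (d - 1)) := by
  have hd : 1 ≤ d := by
    have := Fintype.card_pos (α := G)
    omega
  refine ⟨?_, ?_, ?_⟩
  · rintro rfl
    have hsum : ∀ Φ ∈ cmTypes G c, (Φ ∩ Φ.image ((1 : G) * ·)).card = d := by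
      intro Φ hΦ
      have himg : Φ.image ((1 : G) * ·) = Φ := by
        ext x; simp [cm_mem_image]
      rw [himg, Finset.inter_self, cm_card hG hΦ]
    rw [Finset.sum_congr rfl hsum, Finset.sum_const,
      cm_card_cmTypes hG hc2 hc1, smul_eq_mul, mul_comm]
  · rintro rfl
    refine Finset.sum_eq_zero fun Φ hΦ => ?_
    simp only [cmTypes, Finset.mem_filter] at hΦ
    rw [Finset.card_eq_zero, ← Finset.disjoint_iff_inter_eq_empty]
    exact hΦ.2.1
  · intro hs1 hsc
    have step1 : ∀ Φ : Finset G, (Φ ∩ Φ.image (s * ·)).card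
        = ∑ g : G, if g ∈ Φ ∧ s⁻¹ * g ∈ Φ then 1 else 0 := by
      intro Φ
      have : Φ ∩ Φ.image (s * ·)
          = Finset.univ.filter (fun g => g ∈ Φ ∧ s⁻¹ * g ∈ Φ) := by
        ext x; simp [cm_mem_image]
      rw [this, Finset.card_filter]
    have step2 : ∑ Φ ∈ cmTypes G c, (Φ ∩ Φ.image (s * ·)).card
        = ∑ g : G, ((cmTypes G c).filter (fun Φ => g ∈ Φ ∧ s⁻¹ * g ∈ Φ)).card := by
      simp_rw [step1]
      rw [Finset.sum_comm]
      exact Finset.sum_congr rfl fun g _ => (Finset.card_filter _ _).symm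
    have step3 : 2 * ∑ Φ ∈ cmTypes G c, (Φ ∩ Φ.image (s * ·)).card
        = ∑ g : G, ((cmTypes G c).filter (fun Φ => g ∈ Φ)).card := by
      rw [step2, Finset.mul_sum]
      exact Finset.sum_congr rfl fun g _ => cm_half hc2 hcen hs1 hsc g
    have step4 : ∑ g : G, ((cmTypes G c).filter (fun Φ => g ∈ Φ)).card
        = d * 2 ^ d := by
      have h1 : ∀ g : G, ((cmTypes G c).filter (fun Φ => g ∈ Φ)).card
          = ∑ Φ ∈ cmTypes G c, if g ∈ Φ then 1 else 0 :=
        fun g => Finset.card_filter _ _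
      simp_rw [h1]
      rw [Finset.sum_comm]
      have h2 : ∀ Φ ∈ cmTypes G c, (∑ g : G, if g ∈ Φ then 1 else 0) = d := by
        intro Φ hΦ
        have : Finset.univ.filter (fun g => g ∈ Φ) = Φ := by ext x; simp
        rw [← Finset.card_filter, this, cm_card hG hΦ]
      rw [Finset.sum_congr rfl h2, Finset.sum_const,
        cm_card_cmTypes hG hc2 hc1, smul_eq_mul, mul_comm]
    have h2d : 2 ^ d = 2 * 2 ^ (d - 1) := by
      conv_lhs => rw [show d = d - 1 + 1 by omega]
      rw [pow_succ]
      ring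
    refine Nat.eq_of_mul_eq_mul_left (show 0 < 2 by norm_num) ?_
    rw [step3, step4, h2d]
    ring
end

section
/- Let K be a field, L = K(α) a finite separable extension of degree n, and N/K a field extension admitting n distinct K-algebra homomorphisms σ₁, …, σₙ : L → N. For a subset Υ of these embeddings, the kernel of the N-algebra homomorphism N ⊗_K L → Π_{σ∈Υ} N, n ⊗ l ↦ (n·σ(l))_σ, is the principal ideal of N ⊗_K L generated by Π_{σ∈Υ} (1 ⊗ α − σ(α) ⊗ 1). -/
open TensorProduct Polynomial

/-- For `L = K(α)` finite separable over `K` and `N/K` admitting `n = [L:K]`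
distinct `K`-algebra homomorphisms `L → N`, the kernel of the evaluation map
`N ⊗_K L → ∏_{σ ∈ Υ} N`, `n ⊗ l ↦ (n·σ(l))_σ`, at a subset `Υ` of these
embeddings, is the principal ideal generated by `∏_{σ ∈ Υ} (1 ⊗ α − σ(α) ⊗ 1)`. -/
theorem stmt11 {K L N : Type*} [Field K] [Field L] [Field N]
    [Algebra K L] [Algebra K N] [FiniteDimensional K L] [Algebra.IsSeparable K L]
    (α : L) (hα : Algebra.adjoin K {α} = ⊤)
    (hcard : Fintype.card (L →ₐ[K] N) = Module.finrank K L)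
    (Υ : Finset (L →ₐ[K] N)) :
    RingHom.ker (Pi.algHom K (fun _ : Υ => N)
        (fun σ => Algebra.TensorProduct.productMap (AlgHom.id K N) σ.1) :
          N ⊗[K] L →+* (Υ → N))
      = Ideal.span
          {∏ σ ∈ Υ, ((1 : N) ⊗ₜ[K] α - σ α ⊗ₜ[K] (1 : L))} := by
  classical
  set Ψ : N ⊗[K] L →ₐ[K] (Υ → N) := Pi.algHom K (fun _ : Υ => N)
      (fun σ => Algebra.TensorProduct.productMap (AlgHom.id K N) σ.1) with hΨ
  set φ : N[X] →ₐ[N] N ⊗[K] L := aeval ((1 : N) ⊗ₜ[K] α) with hφdef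
  -- injectivity of evaluation at α on algebra homs
  have hinj : Function.Injective fun σ : L →ₐ[K] N => σ α := by
    intro σ τ h
    apply AlgHom.ext
    intro x
    have hx : x ∈ Algebra.adjoin K {α} := hα ▸ Algebra.mem_top
    induction hx using Algebra.adjoin_induction with
    | mem y hy =>
        rw [Set.mem_singleton_iff.mp hy]; exact h
    | algebraMap r => simp [AlgHom.commutes]
    | add x y hx hy h1 h2 => simp [h1, h2]
    | mul x y hx hy h1 h2 => simp [h1, h2]
  -- surjectivity of φ
  have hrange : ∀ l : L, ∃ p : N[X], φ p = (1 : N) ⊗ₜ[K] l := by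
    intro l
    have hl : l ∈ Algebra.adjoin K {α} := hα ▸ Algebra.mem_top
    induction hl using Algebra.adjoin_induction with
    | mem y hy =>
        rw [Set.mem_singleton_iff] at hy
        subst hy
        exact ⟨X, by simp [hφdef]⟩
    | algebraMap r =>
        refine ⟨C (algebraMap K N r), ?_⟩
        rw [hφdef, aeval_C, ← IsScalarTower.algebraMap_apply K N (N ⊗[K] L)]
        exact ((Algebra.TensorProduct.includeRight (R := K) (A := N) (B := L)).commutes r).symm
    | add x y hx hy h1 h2 =>
        obtain ⟨p, hp⟩ := h1
        obtain ⟨q, hq⟩ := h2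
        exact ⟨p + q, by rw [map_add, hp, hq, tmul_add]⟩
    | mul x y hx hy h1 h2 =>
        obtain ⟨p, hp⟩ := h1
        obtain ⟨q, hq⟩ := h2
        refine ⟨p * q, ?_⟩
        rw [map_mul, hp, hq, Algebra.TensorProduct.tmul_mul_tmul, one_mul]
  have hsurj : Function.Surjective φ := by
    intro x
    induction x using TensorProduct.induction_on with
    | zero => exact ⟨0, map_zero _⟩
    | tmul n l =>
        obtain ⟨p, hp⟩ := hrange l
        refine ⟨C n * p, ?_⟩
        show φ (C n * p) = _
        rw [map_mul, hp, hφdef, aeval_C, Algebra.TensorProduct.algebraMap_apply,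
          Algebra.TensorProduct.tmul_mul_tmul, mul_one, one_mul]
        simp
    | add x y hx hy =>
        obtain ⟨p, hp⟩ := hx
        obtain ⟨q, hq⟩ := hy
        exact ⟨p + q, by rw [map_add, hp, hq]⟩
  -- compute the composite
  have hcomp : ∀ (p : N[X]) (σ : Υ), Ψ (φ p) σ = eval (σ.1 α) p := by
    intro p σ
    have key : (Algebra.TensorProduct.lift (AlgHom.id N N) σ.1
        (fun x y => Commute.all _ _)).comp φ = aeval (σ.1 α) := by
      rw [hφdef, ← aeval_algHom]
      simp
    have hΨσ : Ψ (φ p) σ = (Algebra.TensorProduct.lift (AlgHom.id N N) σ.1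
        (fun x y => Commute.all _ _)) (φ p) := by
      induction (φ p) using TensorProduct.induction_on with
      | zero => simp
      | tmul n l => simp [hΨ]
      | add x y hx hy =>
          simp only [map_add, Pi.add_apply, hx, hy]
    rw [hΨσ, ← coe_aeval_eq_eval, ← key]
    rfl
  -- the generator upstairs
  set g : N[X] := ∏ σ ∈ Υ, (X - C (σ α)) with hg
  have hφg : φ g = ∏ σ ∈ Υ, ((1 : N) ⊗ₜ[K] α - σ α ⊗ₜ[K] (1 : L)) := by
    rw [hg, map_prod]
    refine Finset.prod_congr rfl fun σ _ => ?_
    rw [map_sub, hφdef, aeval_X, aeval_C, Algebra.TensorProduct.algebraMap_apply]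
    simp
  -- kernel upstairs
  have hker : RingHom.ker ((Ψ : N ⊗[K] L →+* (Υ → N)).comp (φ : N[X] →+* N ⊗[K] L))
      = Ideal.span {g} := by
    ext p
    rw [RingHom.mem_ker, Ideal.mem_span_singleton]
    constructor
    · intro hp
      have hroot : ∀ σ ∈ Υ, eval (σ α) p = 0 := by
        intro σ hσ
        have := congrFun hp ⟨σ, hσ⟩
        rw [RingHom.coe_comp, Function.comp_apply] at this
        rw [← hcomp p ⟨σ, hσ⟩]
        exact this
      refine Finset.prod_dvd_of_coprime ?_ fun σ hσ => ?_
      · exact Set.Pairwise.mono (Set.subset_univ _)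
          ((pairwise_coprime_X_sub_C (fun σ τ h => hinj h)).set_pairwise Set.univ)
      · exact dvd_iff_isRoot.mpr (hroot σ hσ)
    · rintro ⟨q, rfl⟩
      funext σ
      show Ψ (φ (g * q)) σ = (0 : Υ → N) σ
      rw [hcomp _ σ]
      rw [eval_mul, hg, eval_prod]
      rw [Finset.prod_eq_zero σ.2 (by simp)]
      simp
  -- put everything together
  have h1 : RingHom.ker (Ψ : N ⊗[K] L →+* (Υ → N))
      = Ideal.map (φ : N[X] →+* N ⊗[K] L)
          (Ideal.comap (φ : N[X] →+* N ⊗[K] L)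
            (RingHom.ker (Ψ : N ⊗[K] L →+* (Υ → N)))) :=
    (Ideal.map_comap_of_surjective _ hsurj _).symm
  rw [h1, RingHom.comap_ker, hker, Ideal.map_span, Set.image_singleton]
  show Ideal.span {φ g} = _
  rw [hφg]
end

section
/- Let E be a field of characteristic 0 with a ring automorphism σ of order 2, let V be a 1-dimensional E-vector space, and let B : V × V → ℚ be a nondegenerate ℚ-bilinear form (on V viewed as a ℚ-vector space) satisfying B(a·x, y) = B(x, σ(a)·y) for all a ∈ E and x, y ∈ V. Extend B ℂ-bilinearly to B_ℂ on ℂ ⊗_ℚ V, and let W ⊆ ℂ ⊗_ℚ V be a nonzero (ℂ ⊗_ℚ E)-submodule. If x ∈ V satisfies B_ℂ(x ⊗ 1, w) = 0 for all w ∈ W, then x = 0. -/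
open TensorProduct

/-- Let `E` be a characteristic-zero field with an order-2 automorphism `σ`,
`V` a 1-dimensional `E`-vector space, and `B` a nondegenerate `ℚ`-bilinear form
on `V` with `B(a•x, y) = B(x, σ(a)•y)`. If `W` is a nonzero `ℂ`-submodule of
`ℂ ⊗_ℚ V` stable under the `E`-action, and `x ∈ V` satisfies
`B_ℂ(x ⊗ 1, w) = 0` for all `w ∈ W`, then `x = 0`. -/
theorem stmt16 {E V : Type*} [Field E] [CharZero E]
    [AddCommGroup V] [Module E V] [Module ℚ V] [IsScalarTower ℚ E V]
    (σ : E ≃+* E) (hσ2 : Function.Involutive σ) (hσ : σ ≠ RingEquiv.refl E)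
    (hdim : Module.finrank E V = 1)
    (B : LinearMap.BilinForm ℚ V) (hB : B.Nondegenerate)
    (hherm : ∀ (a : E) (x y : V), B (a • x) y = B x (σ a • y))
    (W : Submodule ℂ (ℂ ⊗[ℚ] V)) (hW : W ≠ ⊥)
    (hWE : ∀ (a : E), ∀ w ∈ W,
      (LinearMap.baseChange ℂ ((LinearMap.lsmul E V a).restrictScalars ℚ)) w ∈ W)
    (x : V) (hx : ∀ w ∈ W, (B.baseChange ℂ) ((1 : ℂ) ⊗ₜ[ℚ] x) w = 0) :
    x = 0 := by
  by_contra hx0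
  -- x spans V over E
  have hspan : Submodule.span E ({x} : Set V) = ⊤ :=
    (finrank_eq_one_iff_of_nonzero x hx0).mp hdim
  -- right nondegeneracy of B
  have hBr : ∀ y : V, (∀ v : V, B v y = 0) → y = 0 := by
    intro y hy
    by_contra hy0
    have hyspan : Submodule.span E ({y} : Set V) = ⊤ :=
      (finrank_eq_one_iff_of_nonzero y hy0).mp hdim
    apply hy0
    apply hB.1
    intro n
    obtain ⟨a, rfl⟩ : ∃ a : E, a • y = n := by
      rw [← Submodule.mem_span_singleton, hyspan]; trivial
    have h1 : B (σ a • y) y = B y (σ (σ a) • y) := hherm (σ a) y y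
    rw [hσ2 a] at h1
    rw [← h1, hy]
  -- pick a nonzero element of W
  obtain ⟨w, hwW, hw0⟩ := Submodule.exists_mem_ne_zero_of_ne_bot hW
  -- moving the E-action across the base-changed form
  have hmove : ∀ (a : E) (u : ℂ ⊗[ℚ] V),
      (B.baseChange ℂ) ((1 : ℂ) ⊗ₜ[ℚ] (a • x)) u
        = (B.baseChange ℂ) ((1 : ℂ) ⊗ₜ[ℚ] x)
            ((LinearMap.baseChange ℂ ((LinearMap.lsmul E V (σ a)).restrictScalars ℚ)) u) := by
    intro a u
    induction u using TensorProduct.induction_on with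
    | zero => simp
    | tmul c y =>
        simp only [LinearMap.baseChange_tmul, LinearMap.coe_restrictScalars,
          LinearMap.lsmul_apply, LinearMap.BilinForm.baseChange_tmul]
        rw [hherm a x y]
    | add u₁ u₂ h1 h2 => simp [h1, h2]
  -- everything in V pairs to zero with w
  have hall : ∀ v : V, (B.baseChange ℂ) ((1 : ℂ) ⊗ₜ[ℚ] v) w = 0 := by
    intro v
    obtain ⟨a, rfl⟩ : ∃ a : E, a • x = v := by
      rw [← Submodule.mem_span_singleton, hspan]; trivial
    rw [hmove a w]
    exact hx _ (hWE (σ a) w hwW)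
  -- express w through a basis of ℂ over ℚ
  set b := Module.Basis.ofVectorSpace ℚ ℂ with hb
  set e : ℂ ⊗[ℚ] V ≃ₗ[ℚ] (Module.Basis.ofVectorSpaceIndex ℚ ℂ →₀ V) :=
    (TensorProduct.congr b.repr (LinearEquiv.refl ℚ V)).trans
      (TensorProduct.finsuppScalarLeft ℚ V _) with he
  have hkey : ∀ (u : ℂ ⊗[ℚ] V) (v : V) (i : Module.Basis.ofVectorSpaceIndex ℚ ℂ),
      b.repr ((B.baseChange ℂ) ((1 : ℂ) ⊗ₜ[ℚ] v) u) i = B v (e u i) := by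
    intro u v i
    induction u using TensorProduct.induction_on with
    | zero => simp
    | tmul c y =>
        simp only [he, LinearMap.BilinForm.baseChange_tmul, one_mul,
          LinearEquiv.trans_apply, TensorProduct.congr_tmul, LinearEquiv.refl_apply,
          TensorProduct.finsuppScalarLeft_apply_tmul_apply]
        simp [Finsupp.smul_apply, mul_comm]
    | add u₁ u₂ h1 h2 =>
        simp only [map_add, Finsupp.add_apply] at h1 h2 ⊢
        rw [h1, h2]
  -- conclude w = 0, contradiction
  apply hw0
  have hew : e w = 0 := by
    ext i
    apply hBr
    intro v
    have := hkey w v i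
    rw [hall v] at this
    simpa using this.symm
  simpa using congrArg e.symm hew
end
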